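/- Let V be a vector space over ℂ and h a hermitian form on V. Let r_1, …, r_l ∈ V satisfy h(r_i, r_i) = 1 for all i and h(r_i, r_j) = 0 for all i ≠ j, and let ζ_1, …, ζ_l ∈ ℂ with ζ_i ≠ 1 for each i. Let φ = h_{r_1}^{ζ_1} ∘ ⋯ ∘ h_{r_l}^{ζ_l}. Suppose y ∈ V satisfies h(y,y) = c for some real number c < 0, and φ(y) = λ·y for some λ ∈ ℂ. Then λ = 1 and h(y, r_i) = 0 for every i = 1, …, l. -/

import Mathlib

/-- The ζ-reflection in `r`: `x ↦ x − (1 − ζ)·h(x,r)·r`. -/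
def zetaReflection {V : Type*} [AddCommGroup V] [Module ℂ V]
    (h : V → V → ℂ) (r : V) (ζ : ℂ) : V → V :=
  fun x => x - ((1 - ζ) * h x r) • r

section Aux

variable {V : Type*} [AddCommGroup V] [Module ℂ V] (h : V → V → ℂ)
    (h_add : ∀ x y z : V, h (x + y) z = h x z + h y z)
    (h_smul : ∀ (c : ℂ) (x y : V), h (c • x) y = c * h x y)

include h_smul in
lemma aux_h_zero (z : V) : h 0 z = 0 := by
  have := h_smul 0 0 z
  simpa using this

include h_add h_smul in
lemma aux_h_sub (x y z : V) : h (x - y) z = h x z - h y z := by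
  have : x - y = x + (-1 : ℂ) • y := by
    simp [sub_eq_add_neg]
  rw [this, h_add, h_smul]
  ring

include h_add h_smul in
lemma aux_h_sum {ι : Type*} (s : Finset ι) (f : ι → V) (z : V) :
    h (∑ i ∈ s, f i) z = ∑ i ∈ s, h (f i) z := by
  classical
  induction s using Finset.induction_on with
  | empty => simpa using aux_h_zero h h_smul z
  | insert a s hx ih => simp [Finset.sum_insert hx, h_add, ih]

include h_add h_smul in
lemma aux_foldr_eq (l : ℕ) (r : Fin l → V) (ζ : Fin l → ℂ)
    (horth : ∀ i i' : Fin l, i ≠ i' → h (r i) (r i') = 0) (y : V) :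
    ((List.ofFn fun i : Fin l => zetaReflection h (r i) (ζ i)).foldr
        (· ∘ ·) id) y = y - ∑ i, ((1 - ζ i) * h y (r i)) • r i := by
  induction l with
  | zero => simp
  | succ n ih =>
    rw [List.ofFn_succ, List.foldr_cons]
    have horth' : ∀ i i' : Fin n, i ≠ i' →
        h (r i.succ) (r i'.succ) = 0 := fun i i' hne =>
      horth _ _ (fun hcon => hne (Fin.succ_injective n hcon))
    have tail := ih (fun i => r i.succ) (fun i => ζ i.succ) horth'
    simp only [Function.comp_apply, tail, zetaReflection]
    have hT : h (∑ i : Fin n, ((1 - ζ i.succ) * h y (r i.succ)) • r i.succ) (r 0) = 0 := by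
      rw [aux_h_sum h h_add h_smul]
      apply Finset.sum_eq_zero
      intro i _
      rw [h_smul, horth _ _ (Fin.succ_ne_zero i), mul_zero]
    rw [aux_h_sub h h_add h_smul, hT, sub_zero, Fin.sum_univ_succ]
    abel

end Aux

/-- Let `h` be a hermitian form on a complex vector space `V`, `r_1, …, r_l` mutually
orthogonal vectors of norm one, `ζ_1, …, ζ_l ∈ ℂ` all `≠ 1`, and
`φ = h_{r_1}^{ζ_1} ∘ ⋯ ∘ h_{r_l}^{ζ_l}`. If `y ∈ V` has `h(y,y) = c` for a real `c < 0`
and `φ(y) = λ·y` for some `λ ∈ ℂ`, then `λ = 1` and `h(y, r_i) = 0` for every `i`. -/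
theorem product_of_reflections_negative_eigenvector
    {V : Type*} [AddCommGroup V] [Module ℂ V]
    (h : V → V → ℂ)
    (h_add : ∀ x y z : V, h (x + y) z = h x z + h y z)
    (h_smul : ∀ (c : ℂ) (x y : V), h (c • x) y = c * h x y)
    (h_conj : ∀ x y : V, h y x = (starRingEnd ℂ) (h x y))
    (l : ℕ) (r : Fin l → V)
    (hrr : ∀ i, h (r i) (r i) = 1)
    (horth : ∀ i i' : Fin l, i ≠ i' → h (r i) (r i') = 0)
    (ζ : Fin l → ℂ) (hζ : ∀ i, ζ i ≠ 1)
    (y : V) (c : ℝ) (hc : c < 0) (hyy : h y y = (c : ℂ))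
    (lam : ℂ)
    (heig : ((List.ofFn fun i : Fin l => zetaReflection h (r i) (ζ i)).foldr
        (· ∘ ·) id) y = lam • y) :
    lam = 1 ∧ ∀ i : Fin l, h y (r i) = 0 := by
  classical
  set b : Fin l → ℂ := fun i => (1 - ζ i) * h y (r i) with hb
  set S : V := ∑ i, b i • r i with hS
  have hfold := aux_foldr_eq h h_add h_smul l r ζ horth y
  rw [heig] at hfold
  have hfold' : lam • y = y - S := hfold
  have hSy : S = (1 - lam) • y := by
    rw [sub_smul, one_smul, hfold']
    abel
  -- h S (r i) = b i
  have hSr : ∀ i, h S (r i) = b i := by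
    intro i
    rw [hS, aux_h_sum h h_add h_smul]
    rw [Finset.sum_eq_single i]
    · rw [h_smul, hrr i, mul_one]
    · intro j _ hj
      rw [h_smul, horth _ _ hj, mul_zero]
    · intro hi; exact absurd (Finset.mem_univ i) hi
  -- h S y = (1 - lam) * c
  have hSy' : h S y = (1 - lam) * (c : ℂ) := by
    rw [hSy, h_smul, hyy]
  -- h S S two ways
  have hyS : h y S = (starRingEnd ℂ) ((1 - lam) * (c : ℂ)) := by
    rw [h_conj, hSy']
  have hSS1 : h S S = (1 - lam) * ((starRingEnd ℂ) (1 - lam) * (c : ℂ)) := by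
    nth_rewrite 1 [hSy]
    rw [h_smul, hyS]
    simp [map_mul, Complex.conj_ofReal]
  have hSS2 : h S S = ∑ i, (Complex.normSq (b i) : ℂ) := by
    conv_lhs => rw [hS, aux_h_sum h h_add h_smul]
    apply Finset.sum_congr rfl
    intro i _
    rw [h_smul, h_conj, hSr i, Complex.mul_conj]
  have key : (Complex.normSq (1 - lam) * c : ℂ) = ((∑ i, Complex.normSq (b i) : ℝ) : ℂ) := by
    push_cast
    rw [← hSS2, hSS1, ← Complex.mul_conj]
    ring
  have keyR : Complex.normSq (1 - lam) * c = ∑ i, Complex.normSq (b i) := by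
    exact_mod_cast key
  have hsum_nonneg : (0:ℝ) ≤ ∑ i, Complex.normSq (b i) :=
    Finset.sum_nonneg fun i _ => Complex.normSq_nonneg _
  have hns : Complex.normSq (1 - lam) = 0 := by
    by_contra hne
    have hpos : 0 < Complex.normSq (1 - lam) :=
      lt_of_le_of_ne (Complex.normSq_nonneg _) (Ne.symm hne)
    have : Complex.normSq (1 - lam) * c < 0 := mul_neg_of_pos_of_neg hpos hc
    linarith [keyR ▸ this]
  have hlam : lam = 1 := by
    have : (1 : ℂ) - lam = 0 := Complex.normSq_eq_zero.mp hns
    linear_combination -this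
  have hsum0 : ∑ i, Complex.normSq (b i) = 0 := by
    rw [← keyR, hns, zero_mul]
  refine ⟨hlam, fun i => ?_⟩
  have hbi : Complex.normSq (b i) = 0 := by
    have := (Finset.sum_eq_zero_iff_of_nonneg
      (fun i _ => Complex.normSq_nonneg (b i))).mp hsum0 i (Finset.mem_univ i)
    exact this
  have : b i = 0 := Complex.normSq_eq_zero.mp hbi
  rw [hb] at this
  rcases mul_eq_zero.mp this with h1 | h2
  · exact absurd (by linear_combination -h1) (hζ i)
  · exact h2
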